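/- Let G be a finite set and let R be a finite nonempty family of nonempty subsets of G such that (i) R contains no three pairwise ⊆-incomparable members and (ii) R is closed under complementation in G (A ∈ R implies G∖A ∈ R). Then R is the disjoint union of two chains of equal cardinality: there is a chain C ⊆ R (totally ordered by inclusion) such that R = C ∪ {G∖A : A ∈ C}, the families C and {G∖A : A ∈ C} are disjoint, and each has cardinality |R|/2. -/

import Mathlib

open Set

/-- Auxiliary step in Galvin's proof of Dilworth's theorem for width two:
splitting off the lower part of one chain together with a new top element. -/
lemma chain_split_aux {α : Type*} [PartialOrder α] {C1 C2 : Set α} {a a1 : α}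
    (h1 : IsChain (· ≤ ·) C1) (h2 : IsChain (· ≤ ·) C2)
    (hmax : ∀ x ∈ C1, (∃ y ∈ C2, ¬ x ≤ y ∧ ¬ y ≤ x) → x ≤ a1)
    (haa1 : a1 ≤ a) :
    IsChain (· ≤ ·) ({x ∈ C1 | x ≤ a1} ∪ {a}) ∧
    IsChain (· ≤ ·) ({x ∈ C1 | ¬ x ≤ a1} ∪ C2) := by
  constructor
  · intro u hu v hv huv
    rcases hu with hu | hu
    · rcases hv with hv | hv
      · exact h1 hu.1 hv.1 huv
      · left
        rw [Set.mem_singleton_iff] at hv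
        exact hv ▸ le_trans hu.2 haa1
    · rcases hv with hv | hv
      · right
        rw [Set.mem_singleton_iff] at hu
        exact hu ▸ le_trans hv.2 haa1
      · rw [Set.mem_singleton_iff] at hu hv
        exact absurd (hu.trans hv.symm) huv
  · intro u hu v hv huv
    rcases hu with hu | hu <;> rcases hv with hv | hv
    · exact h1 hu.1 hv.1 huv
    · by_contra hc
      push_neg at hc
      exact hu.2 (hmax u hu.1 ⟨v, hv, hc.1, hc.2⟩)
    · by_contra hc
      push_neg at hc
      exact hv.2 (hmax v hv.1 ⟨u, hu, hc.2, hc.1⟩)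
    · exact h2 hu hv huv

/-- Dilworth's theorem for width at most two (finite version): a finite set with no
three pairwise incomparable elements splits into a chain and its (chain) complement. -/
lemma dilworth_two {α : Type*} [PartialOrder α] :
    ∀ n : ℕ, ∀ S : Set α, S.Finite → S.ncard ≤ n →
    (∀ a ∈ S, ∀ b ∈ S, ∀ c ∈ S, a ≤ b ∨ b ≤ a ∨ a ≤ c ∨ c ≤ a ∨ b ≤ c ∨ c ≤ b) →
    ∃ C ⊆ S, IsChain (· ≤ ·) C ∧ IsChain (· ≤ ·) (S \ C) := by
  intro n
  induction n with
  | zero =>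
    intro S hfin hcard _
    have hS : S = ∅ := (Set.ncard_eq_zero hfin).mp (Nat.le_zero.mp hcard)
    refine ⟨∅, empty_subset _, ?_, ?_⟩ <;> simp [hS, IsChain]
  | succ n ih =>
    intro S hfin hcard hw
    rcases S.eq_empty_or_nonempty with hS | hSne
    · refine ⟨∅, empty_subset _, ?_, ?_⟩ <;> simp [hS, IsChain]
    -- pick a maximal element a of S
    obtain ⟨a, haS, hamax⟩ : ∃ a ∈ S, ∀ b ∈ S, id a ≤ id b → id a = id b := by
      obtain ⟨a, haS, hm⟩ := Set.Finite.exists_maximalFor id S hfin hSne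
      exact ⟨a, haS, fun b hb h => le_antisymm h (hm hb h)⟩
    simp only [id] at hamax
    set S' : Set α := S \ {a} with hS'def
    have hS'fin : S'.Finite := hfin.diff
    have hS'card : S'.ncard ≤ n := by
      have h := Set.ncard_diff_singleton_lt_of_mem haS hfin
      rw [← hS'def] at h
      omega
    have hS'sub : S' ⊆ S := diff_subset
    have hw' : ∀ x ∈ S', ∀ y ∈ S', ∀ z ∈ S',
        x ≤ y ∨ y ≤ x ∨ x ≤ z ∨ z ≤ x ∨ y ≤ z ∨ z ≤ y := fun x hx y hy z hz =>
      hw x (hS'sub hx) y (hS'sub hy) z (hS'sub hz)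
    obtain ⟨C1, hC1S', hC1, hC2⟩ := ih S' hS'fin hS'card hw'
    set C2 : Set α := S' \ C1 with hC2def
    have hS'union : S' = C1 ∪ C2 := by
      rw [hC2def, Set.union_diff_cancel hC1S']
    by_cases hch : IsChain (· ≤ ·) S'
    · -- S' itself is a chain; S \ S' = {a}
      refine ⟨S', hS'sub, hch, ?_⟩
      have : S \ S' = {a} := by
        rw [hS'def, Set.diff_diff_right, Set.diff_self, Set.empty_union,
          Set.inter_eq_self_of_subset_right (singleton_subset_iff.mpr haS)]
      rw [this]
      exact Set.Subsingleton.isChain (subsingleton_singleton)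
    · -- S' contains a 2-antichain
      have hanti : ∃ u ∈ S', ∃ v ∈ S', ¬ u ≤ v ∧ ¬ v ≤ u := by
        by_contra h
        push_neg at h
        refine hch fun u hu v hv huv => ?_
        by_cases h' : u ≤ v
        · exact Or.inl h'
        · exact Or.inr (h u hu v hv h')
      obtain ⟨u, hu, v, hv, huv1, huv2⟩ := hanti
      -- the antichain splits between C1 and C2
      set T1 : Set α := {x ∈ C1 | ∃ y ∈ C2, ¬ x ≤ y ∧ ¬ y ≤ x} with hT1def
      set T2 : Set α := {y ∈ C2 | ∃ x ∈ C1, ¬ y ≤ x ∧ ¬ x ≤ y} with hT2def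
      have hne : u ≠ v := fun h => huv1 (h ▸ le_refl u)
      have hsplit : (u ∈ C1 ∧ v ∈ C2) ∨ (u ∈ C2 ∧ v ∈ C1) := by
        have hu' := hu; have hv' := hv
        rw [hS'union] at hu' hv'
        rcases hu' with h1' | h1' <;> rcases hv' with h2' | h2'
        · rcases hC1 h1' h2' hne with h | h
          · exact absurd h huv1
          · exact absurd h huv2
        · exact Or.inl ⟨h1', h2'⟩
        · exact Or.inr ⟨h1', h2'⟩
        · rcases hC2 h1' h2' hne with h | h
          · exact absurd h huv1
          · exact absurd h huv2
      have hT1ne : T1.Nonempty := by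
        rcases hsplit with ⟨h1', h2'⟩ | ⟨h1', h2'⟩
        · exact ⟨u, h1', v, h2', huv1, huv2⟩
        · exact ⟨v, h2', u, h1', huv2, huv1⟩
      have hT2ne : T2.Nonempty := by
        rcases hsplit with ⟨h1', h2'⟩ | ⟨h1', h2'⟩
        · exact ⟨v, h2', u, h1', huv2, huv1⟩
        · exact ⟨u, h1', v, h2', huv1, huv2⟩
      have hT1fin : T1.Finite := hS'fin.subset (fun x hx => hS'union ▸ Or.inl hx.1)
      have hT2fin : T2.Finite := hS'fin.subset (fun x hx => hS'union ▸ Or.inr hx.1)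
      obtain ⟨a1, ha1T, ha1max⟩ : ∃ a1 ∈ T1, ∀ b ∈ T1, id a1 ≤ id b → id a1 = id b := by
        obtain ⟨a1, ha1T, hm⟩ := Set.Finite.exists_maximalFor id T1 hT1fin hT1ne
        exact ⟨a1, ha1T, fun b hb h => le_antisymm h (hm hb h)⟩
      obtain ⟨a2, ha2T, ha2max⟩ : ∃ a2 ∈ T2, ∀ b ∈ T2, id a2 ≤ id b → id a2 = id b := by
        obtain ⟨a2, ha2T, hm⟩ := Set.Finite.exists_maximalFor id T2 hT2fin hT2ne
        exact ⟨a2, ha2T, fun b hb h => le_antisymm h (hm hb h)⟩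
      simp only [id] at ha1max ha2max
      -- a1 is the greatest element of T1, a2 of T2
      have ha1great : ∀ x ∈ T1, x ≤ a1 := by
        intro x hx
        rcases eq_or_ne x a1 with h | h
        · exact h.le
        · rcases hC1 hx.1 ha1T.1 h with h' | h'
          · exact h'
          · exact (ha1max x hx h').ge
      have ha2great : ∀ y ∈ T2, y ≤ a2 := by
        intro y hy
        rcases eq_or_ne y a2 with h | h
        · exact h.le
        · rcases hC2 hy.1 ha2T.1 h with h' | h'
          · exact h'
          · exact (ha2max y hy h').ge
      -- Galvin: a1 and a2 are incomparable
      have hinc : ¬ a1 ≤ a2 ∧ ¬ a2 ≤ a1 := by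
        constructor
        · intro h
          obtain ⟨x, hxC1, hx1, hx2⟩ := ha2T.2
          have : x ∈ T1 := ⟨hxC1, a2, ha2T.1, hx2, hx1⟩
          exact hx2 ((ha1great x this).trans h)
        · intro h
          obtain ⟨y, hyC2, hy1, hy2⟩ := ha1T.2
          have : y ∈ T2 := ⟨hyC2, a1, ha1T.1, hy2, hy1⟩
          exact hy2 ((ha2great y this).trans h)
      have ha1S : a1 ∈ S := hS'sub (hS'union ▸ Or.inl ha1T.1)
      have ha2S : a2 ∈ S := hS'sub (hS'union ▸ Or.inr ha2T.1)
      have ha1ne : a1 ≠ a := by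
        intro h
        exact (hS'union ▸ Or.inl ha1T.1 : a1 ∈ S').2 (by rw [h]; rfl)
      have ha2ne : a2 ≠ a := by
        intro h
        exact (hS'union ▸ Or.inr ha2T.1 : a2 ∈ S').2 (by rw [h]; rfl)
      -- width 2 gives: a1 ≤ a or a2 ≤ a
      have hkey : a1 ≤ a ∨ a2 ≤ a := by
        rcases hw a haS a1 ha1S a2 ha2S with h | h | h | h | h | h
        · exact absurd (hamax a1 ha1S h).symm ha1ne
        · exact Or.inl h
        · exact absurd (hamax a2 ha2S h).symm ha2ne
        · exact Or.inr h
        · exact absurd h hinc.1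
        · exact absurd h hinc.2
      -- helper: compute the complement in S
      have hdiff : ∀ (B1 B2 : Set α) (b1 : α), S' = B1 ∪ B2 → B2 = S' \ B1 →
          S \ ({x ∈ B1 | x ≤ b1} ∪ {a}) = {x ∈ B1 | ¬ x ≤ b1} ∪ B2 := by
        intro B1 B2 b1 hun hdf
        ext x
        subst hdf
        simp only [Set.mem_diff, Set.mem_union, Set.mem_setOf_eq, Set.mem_singleton_iff,
          not_or, not_and]
        constructor
        · rintro ⟨hxS, hnot, hxa⟩
          have hxS' : x ∈ S' := ⟨hxS, hxa⟩
          rw [hun] at hxS'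
          rcases hxS' with h | h
          · exact Or.inl ⟨h, hnot h⟩
          · exact Or.inr h
        · rintro (⟨hxB, hxb⟩ | hxB)
          · have hxS' : x ∈ S' := hun ▸ Or.inl hxB
            exact ⟨hxS'.1, fun _ => hxb, hxS'.2⟩
          · exact ⟨hxB.1.1, fun h => absurd h hxB.2, hxB.1.2⟩
      rcases hkey with hle | hle
      · obtain ⟨hch1, hch2⟩ := chain_split_aux hC1 hC2
          (fun x hx hex => ha1great x ⟨hx, hex⟩) hle
        refine ⟨{x ∈ C1 | x ≤ a1} ∪ {a}, ?_, hch1, ?_⟩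
        · rintro x (hx | hx)
          · exact hS'sub (hS'union ▸ Or.inl hx.1)
          · rw [Set.mem_singleton_iff] at hx; exact hx ▸ haS
        · rw [hdiff C1 C2 a1 hS'union hC2def]
          exact hch2
      · have hC2' : C1 = S' \ C2 := by
          rw [hC2def, Set.diff_diff_cancel_left hC1S']
        obtain ⟨hch1, hch2⟩ := chain_split_aux hC2 hC1
          (fun y hy hex => ha2great y ⟨hy, by
            obtain ⟨x, hx, h1, h2⟩ := hex
            exact ⟨x, hx, h1, h2⟩⟩) hle
        refine ⟨{y ∈ C2 | y ≤ a2} ∪ {a}, ?_, hch1, ?_⟩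
        · rintro y (hy | hy)
          · exact hS'sub (hS'union ▸ Or.inr hy.1)
          · rw [Set.mem_singleton_iff] at hy; exact hy ▸ haS
        · rw [hdiff C2 C1 a2 (by rw [hS'union, Set.union_comm]) hC2']
          exact hch2

/-- Let `G` be a finite set and `R` a finite nonempty family of nonempty
subsets of `G` that contains no three pairwise `⊆`-incomparable members and is closed
under complementation.  Then `R` is the disjoint union of two chains of equal cardinality:
there is a chain `C ⊆ R` with `R = C ∪ {G∖A : A ∈ C}`, the two families are disjoint, and
each has cardinality `|R|/2`. -/
theorem ladder_is_disjoint_union_of_two_chains {G : Type*} [Fintype G]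
    (R : Set (Set G)) (hRne : R.Nonempty) (hmem : ∀ A ∈ R, A.Nonempty)
    (hwidth : ¬ ∃ A ∈ R, ∃ B ∈ R, ∃ C ∈ R,
      (¬ A ⊆ B ∧ ¬ B ⊆ A) ∧ (¬ A ⊆ C ∧ ¬ C ⊆ A) ∧ (¬ B ⊆ C ∧ ¬ C ⊆ B))
    (hcompl : ∀ A ∈ R, Aᶜ ∈ R) :
    ∃ C ⊆ R, IsChain (· ⊆ ·) C ∧
      R = C ∪ ((fun A => Aᶜ) '' C) ∧
      Disjoint C ((fun A => Aᶜ) '' C) ∧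
      C.ncard = R.ncard / 2 ∧ ((fun A => Aᶜ) '' C).ncard = R.ncard / 2 := by
  have hfin : R.Finite := Set.toFinite R
  have hw : ∀ a ∈ R, ∀ b ∈ R, ∀ c ∈ R,
      a ≤ b ∨ b ≤ a ∨ a ≤ c ∨ c ≤ a ∨ b ≤ c ∨ c ≤ b := by
    intro a ha b hb c hc
    by_contra h
    push_neg at h
    exact hwidth ⟨a, ha, b, hb, c, hc, ⟨h.1, h.2.1⟩, ⟨h.2.2.1, h.2.2.2.1⟩,
      ⟨h.2.2.2.2.1, h.2.2.2.2.2⟩⟩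
  obtain ⟨C, hCR, hC, hD⟩ := dilworth_two R.ncard R hfin le_rfl hw
  -- no member of R is comparable with its own complement
  have hAc : ∀ A ∈ R, ¬ (A ⊆ Aᶜ) ∧ ¬ (Aᶜ ⊆ A) ∧ A ≠ Aᶜ := by
    intro A hA
    obtain ⟨x, hx⟩ := hmem A hA
    obtain ⟨y, hy⟩ := hmem Aᶜ (hcompl A hA)
    refine ⟨fun h => (h hx) hx, fun h => hy (h hy), fun h => (h ▸ hx : x ∈ Aᶜ) hx⟩
  -- the complement image of C is exactly R \ C
  have himg : (fun A => Aᶜ) '' C = R \ C := by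
    ext B
    constructor
    · rintro ⟨A, hA, rfl⟩
      refine ⟨hcompl A (hCR hA), fun hAcC => ?_⟩
      rcases hC hA hAcC (hAc A (hCR hA)).2.2 with h | h
      · exact (hAc A (hCR hA)).1 h
      · exact (hAc A (hCR hA)).2.1 h
    · rintro ⟨hBR, hBC⟩
      have hBc : Bᶜ ∈ R := hcompl B hBR
      have hBcC : Bᶜ ∈ C := by
        by_contra h
        have h1 : B ∈ R \ C := ⟨hBR, hBC⟩
        have h2 : Bᶜ ∈ R \ C := ⟨hBc, h⟩
        rcases hD h1 h2 (hAc B hBR).2.2 with h' | h'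
        · exact (hAc B hBR).1 h'
        · exact (hAc B hBR).2.1 h'
      exact ⟨Bᶜ, hBcC, compl_compl B⟩
  have hunion : R = C ∪ ((fun A => Aᶜ) '' C) := by
    rw [himg, Set.union_diff_cancel hCR]
  have hdisj : Disjoint C ((fun A => Aᶜ) '' C) := by
    rw [himg]
    exact disjoint_sdiff_right
  have himgcard : ((fun A => Aᶜ) '' C).ncard = C.ncard :=
    Set.ncard_image_of_injective C compl_injective
  have hsum : (R \ C).ncard + C.ncard = R.ncard :=
    Set.ncard_diff_add_ncard_of_subset hCR hfin
  have heq : (R \ C).ncard = C.ncard := by rw [← himg, himgcard]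
  have hhalf : C.ncard = R.ncard / 2 := by omega
  exact ⟨C, hCR, hC, hunion, hdisj, hhalf, by rw [himgcard, hhalf]⟩
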